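/- arXiv:2210.11102 — 2 statements merged into one kernel-verified Lean document; each statement's English description precedes it below -/
import Mathlib

section
/- If q is a positive semidefinite kernel on a set S that is continuous and bounded, then the embedding of the reproducing kernel Hilbert space H_q(D) into L^2(D) (for D ⊆ S bounded measurable) is Hilbert–Schmidt, with squared Hilbert–Schmidt norm equal to ∫_D q(x,x) dx. -/
open MeasureTheory
open scoped RealInnerProductSpace ENNReal

/-- If `q(x,y) = ⟪K x, K y⟫` is a continuous, bounded, positive semidefinite
kernel on `S ⊇ D` (here represented through its kernel sections `K` into the RKHS `H`),
then the embedding `ι` of the RKHS into `L²(D)` is Hilbert–Schmidt, with squared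
Hilbert–Schmidt norm `∑' j, ‖ι (e j)‖²` equal to `∫_D q(x,x) dx`. -/
theorem stmt0 {d : ℕ} (D : Set (EuclideanSpace ℝ (Fin d)))
    (hDb : Bornology.IsBounded D) (hDm : MeasurableSet D)
    {H : Type*} [NormedAddCommGroup H] [InnerProductSpace ℝ H] [CompleteSpace H]
    (K : EuclideanSpace ℝ (Fin d) → H)
    (hcont : ContinuousOn
      (fun p : EuclideanSpace ℝ (Fin d) × EuclideanSpace ℝ (Fin d) => ⟪K p.1, K p.2⟫)
      (D ×ˢ D))
    (hbdd : ∃ M : ℝ, ∀ x ∈ D, ∀ y ∈ D, |⟪K x, K y⟫| ≤ M)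
    (e : HilbertBasis ℕ ℝ H)
    (ι : H →L[ℝ] Lp ℝ 2 (volume.restrict D))
    (hι : ∀ f : H,
      (ι f : EuclideanSpace ℝ (Fin d) → ℝ) =ᵐ[volume.restrict D] fun x => ⟪f, K x⟫) :
    Summable (fun j => ‖ι (e j)‖ ^ 2) ∧
      ∑' j, ‖ι (e j)‖ ^ 2 = ∫ x in D, ⟪K x, K x⟫ := by
  obtain ⟨M, hM⟩ := hbdd
  have hmeas : ∀ j : ℕ, AEStronglyMeasurable (fun x => ⟪e j, K x⟫) (volume.restrict D) :=
    fun j => (Lp.aestronglyMeasurable (ι (e j))).congr (hι (e j))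
  set A : ℕ → ℝ≥0∞ :=
    fun j => ∫⁻ x, ENNReal.ofReal (⟪e j, K x⟫ ^ 2) ∂(volume.restrict D) with hA
  have hAmeas : ∀ j, AEMeasurable (fun x => ENNReal.ofReal (⟪e j, K x⟫ ^ 2))
      (volume.restrict D) := fun j =>
    ((hmeas j).aemeasurable.pow_const 2).ennreal_ofReal
  have hnorm : ∀ j, ‖ι (e j)‖ ^ 2 = (A j).toReal := by
    intro j
    have h1 : ‖ι (e j)‖ ^ 2 = ∫ x, ⟪e j, K x⟫ ^ 2 ∂(volume.restrict D) := by
      rw [← real_inner_self_eq_norm_sq, L2.inner_def]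
      refine integral_congr_ae ?_
      filter_upwards [hι (e j)] with x hx
      simp only [RCLike.inner_apply, conj_trivial, hx, sq]
    rw [h1, integral_eq_lintegral_of_nonneg_ae (Filter.Eventually.of_forall fun x => sq_nonneg _)
      (((hmeas j).aemeasurable.pow_const 2).aestronglyMeasurable)]
  have hpar : ∀ x, Summable (fun j => ⟪e j, K x⟫ ^ 2) ∧
      (∑' j, ⟪e j, K x⟫ ^ 2) = ⟪K x, K x⟫ := by
    intro x
    have hs := e.summable_inner_mul_inner (K x) (K x)
    have heq : (fun j => ⟪K x, e j⟫ * ⟪e j, K x⟫) = fun j => ⟪e j, K x⟫ ^ 2 := by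
      funext j; rw [real_inner_comm (K x) (e j), sq]
    rw [heq] at hs
    refine ⟨hs, ?_⟩
    have := e.tsum_inner_mul_inner (K x) (K x)
    rwa [heq] at this
  have hswap : ∑' j, A j = ∫⁻ x, ENNReal.ofReal ⟪K x, K x⟫ ∂(volume.restrict D) := by
    rw [hA, ← lintegral_tsum hAmeas]
    refine lintegral_congr fun x => ?_
    rw [← ENNReal.ofReal_tsum_of_nonneg (fun j => sq_nonneg _) (hpar x).1, (hpar x).2]
  have hfin : ∫⁻ x, ENNReal.ofReal ⟪K x, K x⟫ ∂(volume.restrict D) < ∞ := by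
    have hbound : ∀ᵐ x ∂(volume.restrict D),
        ENNReal.ofReal ⟪K x, K x⟫ ≤ ENNReal.ofReal M := by
      filter_upwards [ae_restrict_mem hDm] with x hx
      exact ENNReal.ofReal_le_ofReal ((le_abs_self _).trans (hM x hx x hx))
    calc ∫⁻ x, ENNReal.ofReal ⟪K x, K x⟫ ∂(volume.restrict D)
        ≤ ∫⁻ _, ENNReal.ofReal M ∂(volume.restrict D) := lintegral_mono_ae hbound
      _ = ENNReal.ofReal M * (volume.restrict D) Set.univ := by rw [lintegral_const]
      _ < ∞ := by
          refine ENNReal.mul_lt_top ENNReal.ofReal_lt_top ?_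
          rw [Measure.restrict_apply_univ]
          exact hDb.measure_lt_top
  have hsumfin : ∑' j, A j ≠ ∞ := by rw [hswap]; exact hfin.ne
  have hAfin : ∀ j, A j ≠ ∞ := fun j => ne_of_lt (lt_of_le_of_lt (ENNReal.le_tsum j)
    (lt_of_le_of_ne le_top hsumfin))
  constructor
  · have := ENNReal.summable_toReal hsumfin
    exact this.congr fun j => (hnorm j).symm
  · have h2 : ∑' j, ‖ι (e j)‖ ^ 2 = (∑' j, A j).toReal := by
      rw [tsum_congr hnorm]
      exact (ENNReal.tsum_toReal_eq hAfin).symm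
    rw [h2, hswap]
    have hqm : AEStronglyMeasurable (fun x => ⟪K x, K x⟫) (volume.restrict D) := by
      have hc : ContinuousOn (fun x => ⟪K x, K x⟫) D :=
        hcont.comp (continuousOn_id.prodMk continuousOn_id) (fun x hx => ⟨hx, hx⟩)
      exact (hc.aemeasurable hDm).aestronglyMeasurable
    rw [integral_eq_lintegral_of_nonneg_ae
      (Filter.Eventually.of_forall fun x => real_inner_self_nonneg) hqm]
end

section
/- Let D ⊂ ℝ^d be a bounded domain, q a bounded positive semidefinite kernel on D with separable RKHS H_q, and g : ℝ × D → ℝ Lipschitz in both variables: |g(x₁,y₁) − g(x₂,y₂)| ≤ C(|x₁−x₂| + |y₁−y₂|). Define (G(u)v)(x) := g(u(x),x)v(x). Then G(u) ∈ L₂(H_q, L²(D)) for every u ∈ L²(D), and ‖G(u) − G(v)‖_{L₂(H_q, L²(D))} ≤ C' ‖u − v‖_{L²(D)} with C' = C (sup_{x∈D} q(x,x))^{1/2}. -/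
open MeasureTheory

lemma stmt19_aux {dim : ℕ} (D : Set (EuclideanSpace ℝ (Fin dim))) (hDm : MeasurableSet D)
    {Hq : Type*} [NormedAddCommGroup Hq] [InnerProductSpace ℝ Hq] [CompleteSpace Hq]
    (e : HilbertBasis ℕ ℝ Hq)
    (ev : Hq →ₗ[ℝ] (EuclideanSpace ℝ (Fin dim) → ℝ))
    (hev : ∀ j, Measurable (ev (e j)))
    (q : EuclideanSpace ℝ (Fin dim) → EuclideanSpace ℝ (Fin dim) → ℝ)
    (hker : ∀ x ∈ D, (Summable fun j : ℕ => ev (e j) x ^ 2) ∧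
      ∑' j : ℕ, ev (e j) x ^ 2 = q x x)
    (hQbdd : BddAbove ((fun x => q x x) '' D))
    (f : EuclideanSpace ℝ (Fin dim) → ℝ)
    (hf : AEStronglyMeasurable f (volume.restrict D))
    (hf2 : Integrable (fun x => f x ^ 2) (volume.restrict D)) :
    Summable (fun j : ℕ => ∫ x in D, (f x * ev (e j) x) ^ 2) ∧
      ∑' j : ℕ, ∫ x in D, (f x * ev (e j) x) ^ 2
        ≤ sSup ((fun x => q x x) '' D) * ∫ x in D, f x ^ 2 := by
  set Q := sSup ((fun x => q x x) '' D) with hQ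
  have hqQ : ∀ x ∈ D, q x x ≤ Q := fun x hx => le_csSup hQbdd ⟨x, hx, rfl⟩
  have hjQ : ∀ x ∈ D, ∀ j, (ev (e j) x) ^ 2 ≤ Q := by
    intro x hx j
    refine le_trans ?_ (hqQ x hx)
    rw [← (hker x hx).2]
    exact Summable.le_tsum (hker x hx).1 j (fun i _ => sq_nonneg _)
  have hInt : ∀ j : ℕ, Integrable (fun x => (f x * ev (e j) x) ^ 2) (volume.restrict D) := by
    intro j
    refine Integrable.mono' (hf2.const_mul Q) ?_ ?_
    · exact ((hf.mul (hev j).aestronglyMeasurable).pow 2)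
    · filter_upwards [ae_restrict_mem hDm] with x hx
      rw [Real.norm_eq_abs, abs_of_nonneg (sq_nonneg _), mul_pow, mul_comm]
      exact mul_le_mul_of_nonneg_right (hjQ x hx j) (sq_nonneg _)
  have hsum_le : ∀ F : Finset ℕ,
      ∑ j ∈ F, ∫ x in D, (f x * ev (e j) x) ^ 2 ≤ Q * ∫ x in D, f x ^ 2 := by
    intro F
    rw [← integral_finset_sum F (fun j _ => hInt j), ← integral_const_mul]
    refine integral_mono_ae (integrable_finset_sum F (fun j _ => hInt j)) (hf2.const_mul Q) ?_
    filter_upwards [ae_restrict_mem hDm] with x hx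
    have h1 : ∑ j ∈ F, (f x * ev (e j) x) ^ 2 = f x ^ 2 * ∑ j ∈ F, (ev (e j) x) ^ 2 := by
      rw [Finset.mul_sum]; simp [mul_pow]
    rw [h1]
    have h2 : ∑ j ∈ F, (ev (e j) x) ^ 2 ≤ q x x := by
      rw [← (hker x hx).2]
      exact Summable.sum_le_tsum F (fun i _ => sq_nonneg _) (hker x hx).1
    calc f x ^ 2 * ∑ j ∈ F, (ev (e j) x) ^ 2 ≤ f x ^ 2 * Q :=
          mul_le_mul_of_nonneg_left (h2.trans (hqQ x hx)) (sq_nonneg _)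
      _ = Q * f x ^ 2 := mul_comm _ _
  have hS : Summable (fun j : ℕ => ∫ x in D, (f x * ev (e j) x) ^ 2) :=
    summable_of_sum_le (fun j => integral_nonneg fun x => sq_nonneg _) hsum_le
  exact ⟨hS, Summable.tsum_le_of_sum_le hS hsum_le⟩

/-- Let `D ⊂ ℝ^dim` be a bounded domain, `q` a bounded positive
semidefinite kernel on `D` with separable RKHS `H_q` (with orthonormal basis `(e_j)`,
function values given by `ev`, and the pointwise identity `Σ_j e_j(x)² = q(x,x)`), and
`g : ℝ × D → ℝ` Lipschitz in both variables:
`|g(x₁,y₁) − g(x₂,y₂)| ≤ C(|x₁−x₂| + |y₁−y₂|)`. Define `(G(u)v)(x) := g(u(x),x)v(x)`.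
Then `G(u)` is Hilbert–Schmidt from `H_q` to `L²(D)` for every `u ∈ L²(D)` (its squared
Hilbert–Schmidt norm being `Σ_j ∫_D (g(u(x),x) e_j(x))² dx`, which is summable), and
`‖G(u) − G(v)‖_{L₂(H_q,L²(D))} ≤ C' ‖u − v‖_{L²(D)}` with
`C' = C (sup_{x∈D} q(x,x))^{1/2}`. -/
theorem stmt19 {dim : ℕ} (D : Set (EuclideanSpace ℝ (Fin dim)))
    (hDb : Bornology.IsBounded D) (hDm : MeasurableSet D)
    {Hq : Type*} [NormedAddCommGroup Hq] [InnerProductSpace ℝ Hq] [CompleteSpace Hq]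
    (e : HilbertBasis ℕ ℝ Hq)
    (ev : Hq →ₗ[ℝ] (EuclideanSpace ℝ (Fin dim) → ℝ))
    (hev : ∀ j, Measurable (ev (e j)))
    (q : EuclideanSpace ℝ (Fin dim) → EuclideanSpace ℝ (Fin dim) → ℝ)
    (hker : ∀ x ∈ D, (Summable fun j : ℕ => ev (e j) x ^ 2) ∧
      ∑' j : ℕ, ev (e j) x ^ 2 = q x x)
    (hQbdd : BddAbove ((fun x => q x x) '' D))
    (g : ℝ → EuclideanSpace ℝ (Fin dim) → ℝ) (C : ℝ) (hC : 0 ≤ C)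
    (hg : ∀ x₁ x₂ : ℝ, ∀ y₁ ∈ D, ∀ y₂ ∈ D,
      |g x₁ y₁ - g x₂ y₂| ≤ C * (|x₁ - x₂| + ‖y₁ - y₂‖))
    (u v : EuclideanSpace ℝ (Fin dim) → ℝ)
    (hu : MemLp u 2 (volume.restrict D)) (hv : MemLp v 2 (volume.restrict D)) :
    Summable (fun j : ℕ => ∫ x in D, (g (u x) x * ev (e j) x) ^ 2) ∧
      Real.sqrt (∑' j : ℕ, ∫ x in D, ((g (u x) x - g (v x) x) * ev (e j) x) ^ 2)
        ≤ C * Real.sqrt (sSup ((fun x => q x x) '' D)) *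
          Real.sqrt (∫ x in D, (u x - v x) ^ 2) := by
  rcases D.eq_empty_or_nonempty with rfl | ⟨x₀, hx₀⟩
  · constructor
    · simp [Measure.restrict_empty]
    · simp [Measure.restrict_empty]
  haveI : IsFiniteMeasure (volume.restrict D) :=
    ⟨by rw [Measure.restrict_apply_univ]; exact hDb.measure_lt_top⟩
  set Q := sSup ((fun x => q x x) '' D) with hQdef
  have hQ0 : 0 ≤ Q := by
    refine le_trans ?_ (le_csSup hQbdd ⟨x₀, hx₀, rfl⟩)
    show (0:ℝ) ≤ q x₀ x₀
    rw [← (hker x₀ hx₀).2]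
    exact tsum_nonneg fun j => sq_nonneg _
  -- Lipschitz extension of g on ℝ × D to get measurability of compositions
  have hlip : LipschitzOnWith (Real.toNNReal (2 * C))
      (fun p : ℝ × EuclideanSpace ℝ (Fin dim) => g p.1 p.2) (Set.univ ×ˢ D) := by
    apply LipschitzOnWith.of_dist_le'
    rintro ⟨a, y⟩ ⟨-, hy⟩ ⟨b, z⟩ ⟨-, hz⟩
    rw [Real.dist_eq]
    have h1 : |a - b| ≤ dist (a, y) (b, z) := le_max_left _ _
    have h2 : ‖y - z‖ ≤ dist (a, y) (b, z) := by
      rw [← dist_eq_norm]; exact le_max_right _ _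
    calc |g a y - g b z| ≤ C * (|a - b| + ‖y - z‖) := hg a b y hy z hz
      _ ≤ C * (dist (a, y) (b, z) + dist (a, y) (b, z)) := by
          exact mul_le_mul_of_nonneg_left (add_le_add h1 h2) hC
      _ = 2 * C * dist (a, y) (b, z) := by ring
  obtain ⟨G, hGlip, hGeq⟩ := hlip.extend_real
  have hmeas : ∀ w : EuclideanSpace ℝ (Fin dim) → ℝ,
      AEStronglyMeasurable w (volume.restrict D) →
      AEStronglyMeasurable (fun x => g (w x) x) (volume.restrict D) := by
    intro w hw
    have h1 : AEStronglyMeasurable (fun x => G (w x, x)) (volume.restrict D) :=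
      hGlip.continuous.comp_aestronglyMeasurable (hw.prodMk aestronglyMeasurable_id)
    refine h1.congr ?_
    filter_upwards [ae_restrict_mem hDm] with x hx
    exact (hGeq ⟨Set.mem_univ _, hx⟩).symm
  -- bound |g s x| ≤ A + C * |s| on D
  obtain ⟨r, hr⟩ := hDb.subset_closedBall x₀
  set A := C * r + |g 0 x₀| with hAdef
  have habs : ∀ (s : ℝ), ∀ x ∈ D, |g s x| ≤ A + C * |s| := by
    intro s x hx
    have h1 : |g s x - g 0 x₀| ≤ C * (|s - 0| + ‖x - x₀‖) := hg s 0 x hx x₀ hx₀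
    have h2 : ‖x - x₀‖ ≤ r := by
      have := hr hx
      rwa [Metric.mem_closedBall, dist_eq_norm] at this
    have h3 : |g s x| ≤ |g s x - g 0 x₀| + |g 0 x₀| := by
      calc |g s x| = |(g s x - g 0 x₀) + g 0 x₀| := by ring_nf
        _ ≤ |g s x - g 0 x₀| + |g 0 x₀| := abs_add_le _ _
    have h4 : C * (|s - 0| + ‖x - x₀‖) ≤ C * |s| + C * r := by
      rw [sub_zero]
      nlinarith [abs_nonneg s, mul_le_mul_of_nonneg_left h2 hC]
    calc |g s x| ≤ |g s x - g 0 x₀| + |g 0 x₀| := h3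
      _ ≤ C * (|s - 0| + ‖x - x₀‖) + |g 0 x₀| := add_le_add_left h1 _
      _ ≤ (C * |s| + C * r) + |g 0 x₀| := add_le_add_left h4 _
      _ = A + C * |s| := by rw [hAdef]; ring
  have hint : ∀ w : EuclideanSpace ℝ (Fin dim) → ℝ, MemLp w 2 (volume.restrict D) →
      Integrable (fun x => (g (w x) x) ^ 2) (volume.restrict D) := by
    intro w hw
    have hA : MemLp (fun x => A + C * |w x|) 2 (volume.restrict D) := by
      have := (hw.norm.const_mul C)
      simpa [Real.norm_eq_abs, Pi.add_def] using (memLp_const (μ := volume.restrict D) (p := 2) A).add this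
    refine Integrable.mono' hA.integrable_sq ((hmeas w hw.aestronglyMeasurable).pow 2) ?_
    filter_upwards [ae_restrict_mem hDm] with x hx
    rw [Real.norm_eq_abs, abs_of_nonneg (sq_nonneg _), ← sq_abs]
    have h0 : (0:ℝ) ≤ A + C * |w x| := le_trans (abs_nonneg _) (habs (w x) x hx)
    exact pow_le_pow_left₀ (abs_nonneg _) (habs (w x) x hx) 2
  constructor
  · exact (stmt19_aux D hDm e ev hev q hker hQbdd (fun x => g (u x) x)
      (hmeas u hu.aestronglyMeasurable) (hint u hu)).1
  · -- Lipschitz estimate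
    set w : EuclideanSpace ℝ (Fin dim) → ℝ := fun x => g (u x) x - g (v x) x with hwdef
    have hwm : AEStronglyMeasurable w (volume.restrict D) :=
      (hmeas u hu.aestronglyMeasurable).sub (hmeas v hv.aestronglyMeasurable)
    have hwle : ∀ x ∈ D, |w x| ≤ C * |u x - v x| := by
      intro x hx
      have := hg (u x) (v x) x hx x hx
      simpa using this
    have huv2 : Integrable (fun x => C ^ 2 * (u x - v x) ^ 2) (volume.restrict D) :=
      ((hu.sub hv).integrable_sq).const_mul (C ^ 2)
    have hw2 : Integrable (fun x => w x ^ 2) (volume.restrict D) := by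
      refine Integrable.mono' huv2 (hwm.pow 2) ?_
      filter_upwards [ae_restrict_mem hDm] with x hx
      rw [Real.norm_eq_abs, abs_of_nonneg (sq_nonneg _), ← sq_abs]
      calc |w x| ^ 2 ≤ (C * |u x - v x|) ^ 2 :=
            pow_le_pow_left₀ (abs_nonneg _) (hwle x hx) 2
        _ = C ^ 2 * (u x - v x) ^ 2 := by rw [mul_pow, sq_abs]
    have haux := stmt19_aux D hDm e ev hev q hker hQbdd w hwm hw2
    have hI : ∫ x in D, w x ^ 2 ≤ C ^ 2 * ∫ x in D, (u x - v x) ^ 2 := by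
      rw [← integral_const_mul]
      refine integral_mono_ae hw2 huv2 ?_
      filter_upwards [ae_restrict_mem hDm] with x hx
      rw [← sq_abs (w x)]
      calc |w x| ^ 2 ≤ (C * |u x - v x|) ^ 2 :=
            pow_le_pow_left₀ (abs_nonneg _) (hwle x hx) 2
        _ = C ^ 2 * (u x - v x) ^ 2 := by rw [mul_pow, sq_abs]
    have hI0 : 0 ≤ ∫ x in D, (u x - v x) ^ 2 := integral_nonneg fun x => sq_nonneg _
    have hfin : ∑' j : ℕ, ∫ x in D, (w x * ev (e j) x) ^ 2
        ≤ Q * (C ^ 2 * ∫ x in D, (u x - v x) ^ 2) :=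
      haux.2.trans (mul_le_mul_of_nonneg_left hI hQ0)
    calc Real.sqrt (∑' j : ℕ, ∫ x in D, ((g (u x) x - g (v x) x) * ev (e j) x) ^ 2)
        ≤ Real.sqrt (Q * (C ^ 2 * ∫ x in D, (u x - v x) ^ 2)) := Real.sqrt_le_sqrt hfin
      _ = C * Real.sqrt Q * Real.sqrt (∫ x in D, (u x - v x) ^ 2) := by
          rw [Real.sqrt_mul hQ0, Real.sqrt_mul (sq_nonneg C), Real.sqrt_sq hC]; ring
end
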